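/- Let T_1, T_2, ... be independent with T_j ~ Exp(j) and let N_t = max{n : T_1 + ... + T_n ≤ t} (with N_t = 0 if T_1 > t). Then for every k ≥ 0, P(N_t = k) = e^{-t}(1 - e^{-t})^k; that is, N_t is geometrically distributed with parameter e^{-t}. -/

import Mathlib

open MeasureTheory ProbabilityTheory Real Set

lemma my_ftc (n : ℕ) (s : ℝ) :
    ∫ y in (0:ℝ)..s, ((n:ℝ)+1) * (exp (-y) - exp (-s))^n * exp (-y)
      = (1 - exp (-s))^(n+1) := by
  have h : ∀ y ∈ Set.uIcc (0:ℝ) s,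
      HasDerivAt (fun y => -(exp (-y) - exp (-s))^(n+1))
        (((n:ℝ)+1) * (exp (-y) - exp (-s))^n * exp (-y)) y := by
    intro y _
    have h1 : HasDerivAt (fun y : ℝ => exp (-y) - exp (-s)) (exp (-y) * (-1)) y :=
      (((hasDerivAt_id y).neg).exp).sub_const _
    have h2 := (h1.pow (n+1)).neg
    refine h2.congr_deriv ?_
    push_cast
    ring
  have hc : Continuous fun y : ℝ => ((n:ℝ)+1) * (exp (-y) - exp (-s))^n * exp (-y) := by
    fun_prop
  rw [intervalIntegral.integral_eq_sub_of_hasDerivAt h (hc.intervalIntegrable 0 s)]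
  simp [sub_self, zero_pow (Nat.succ_ne_zero n), exp_zero]

lemma my_lint (n : ℕ) (s : ℝ) (hs : 0 ≤ s) :
    ∫⁻ y, ENNReal.ofReal ((if 0 ≤ y then ((n:ℝ)+1) * exp (-(((n:ℝ)+1) * y)) else 0) *
      (if 0 ≤ s - y then (1 - exp (-(s - y)))^n else 0)) ∂volume
      = ENNReal.ofReal ((1 - exp (-s))^(n+1)) := by
  set G : ℝ → ℝ := fun y => ((n:ℝ)+1) * (exp (-y) - exp (-s))^n * exp (-y) with hG
  have hGc : Continuous G := by fun_prop
  have key : ∀ y : ℝ, y ≠ 0 →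
      ENNReal.ofReal ((if 0 ≤ y then ((n:ℝ)+1) * exp (-(((n:ℝ)+1) * y)) else 0) *
        (if 0 ≤ s - y then (1 - exp (-(s - y)))^n else 0))
      = (Ioc 0 s).indicator (fun y => ENNReal.ofReal (G y)) y := by
    intro y hy0
    by_cases hmem : y ∈ Ioc 0 s
    · rw [Set.mem_Ioc] at hmem
      obtain ⟨h1, h2⟩ := hmem
      rw [if_pos h1.le, if_pos (by linarith), Set.indicator_of_mem (Set.mem_Ioc.2 ⟨h1, h2⟩)]
      congr 1
      have : (1 - exp (-(s - y)))^n * exp (-((n:ℝ) * y)) = (exp (-y) - exp (-s))^n := by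
        rw [show -((n:ℝ)*y) = (n:ℝ)*(-y) by ring, Real.exp_nat_mul, ← mul_pow]
        congr 1
        rw [sub_mul, one_mul, ← Real.exp_add]
        congr 1
        ring
      calc ((n:ℝ)+1) * exp (-(((n:ℝ)+1) * y)) * (1 - exp (-(s - y)))^n
          = ((n:ℝ)+1) * ((1 - exp (-(s - y)))^n * exp (-((n:ℝ) * y))) * exp (-y) := by
            rw [show -(((n:ℝ)+1) * y) = -((n:ℝ)*y) + -y by ring, Real.exp_add]; ring
        _ = G y := by rw [this]
    · rw [Set.indicator_of_notMem hmem]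
      rcases lt_or_ge y 0 with h | h
      · rw [if_neg (not_le.2 h), zero_mul, ENNReal.ofReal_zero]
      · have hy : 0 < y := lt_of_le_of_ne h (Ne.symm hy0)
        have hys : s < y := by
          by_contra hc
          exact hmem ⟨hy, not_lt.1 hc⟩
        rw [if_neg (show ¬ (0 ≤ s - y) by linarith), mul_zero, ENNReal.ofReal_zero]
  have h0 : ∀ᵐ (y : ℝ) ∂volume, y ≠ 0 := by
    rw [ae_iff]
    have : {y : ℝ | ¬ y ≠ 0} = {0} := by ext y; simp
    rw [this]
    exact measure_singleton 0
  have hae : (fun y => ENNReal.ofReal ((if 0 ≤ y then ((n:ℝ)+1) * exp (-(((n:ℝ)+1) * y)) else 0) *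
        (if 0 ≤ s - y then (1 - exp (-(s - y)))^n else 0)))
      =ᵐ[volume] (Ioc 0 s).indicator (fun y => ENNReal.ofReal (G y)) := by
    filter_upwards [h0] with y hy using key y hy
  rw [lintegral_congr_ae hae, lintegral_indicator measurableSet_Ioc]
  have hnonneg : ∀ y ∈ Ioc (0:ℝ) s, 0 ≤ G y := by
    intro y ⟨h1, h2⟩
    have h3 : 0 ≤ exp (-y) - exp (-s) := by
      have : exp (-s) ≤ exp (-y) := exp_le_exp.2 (by linarith)
      linarith
    exact mul_nonneg (mul_nonneg (by positivity) (pow_nonneg h3 n)) (exp_pos _).le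
  rw [← ofReal_integral_eq_lintegral_ofReal
      (hGc.integrableOn_Icc.mono_set Ioc_subset_Icc_self)
      ((ae_restrict_iff' measurableSet_Ioc).2 (ae_of_all _ hnonneg))]
  rw [← intervalIntegral.integral_of_le hs, my_ftc]

lemma cdf_sum_exp {Ω : Type*} [MeasurableSpace Ω] (P : Measure Ω) [IsProbabilityMeasure P]
    (T : ℕ → Ω → ℝ) (hmeas : ∀ j, Measurable (T j))
    (hindep : iIndepFun T P)
    (hlaw : ∀ j : ℕ, Measure.map (T j) P = expMeasure ((j : ℝ) + 1)) (n : ℕ) :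
    ∀ s : ℝ, P {ω | ∑ j ∈ Finset.range n, T j ω ≤ s}
      = ENNReal.ofReal (if 0 ≤ s then (1 - exp (-s)) ^ n else 0) := by
  induction n with
  | zero =>
    intro s
    by_cases hs : 0 ≤ s <;> simp [hs]
  | succ n ih =>
    intro s
    set S : Ω → ℝ := fun ω => ∑ j ∈ Finset.range n, T j ω with hSdef
    have hS : Measurable S := Finset.measurable_sum _ fun j _ => hmeas j
    have hind : IndepFun (T n) S P := by
      have h := hindep.indepFun_sum_range_succ hmeas n
      have he : (∑ j ∈ Finset.range n, T j) = S := by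
        funext ω; simp [hSdef]
      rw [he] at h
      exact h.symm
    have hmap : Measure.map (fun ω => (T n ω, S ω)) P
        = (expMeasure ((n:ℝ)+1)).prod (Measure.map S P) := by
      rw [← hlaw n]
      exact (indepFun_iff_map_prod_eq_prod_map_map (hmeas n).aemeasurable hS.aemeasurable).1 hind
    have hprob : IsProbabilityMeasure (Measure.map S P) := Measure.isProbabilityMeasure_map hS.aemeasurable
    have hset : MeasurableSet {p : ℝ × ℝ | p.1 + p.2 ≤ s} :=
      measurableSet_le (measurable_fst.add measurable_snd) measurable_const
    have step1 : P {ω | ∑ j ∈ Finset.range (n+1), T j ω ≤ s}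
        = ∫⁻ y, Measure.map S P (Iic (s - y)) ∂(expMeasure ((n:ℝ)+1)) := by
      have e1 : {ω | ∑ j ∈ Finset.range (n+1), T j ω ≤ s}
          = (fun ω => (T n ω, S ω)) ⁻¹' {p : ℝ × ℝ | p.1 + p.2 ≤ s} := by
        ext ω
        simp only [Set.mem_setOf_eq, Set.mem_preimage, Finset.sum_range_succ, hSdef]
        constructor <;> intro h <;> linarith
      rw [e1, ← Measure.map_apply ((hmeas n).prodMk hS) hset, hmap,
        Measure.prod_apply hset]
      congr 1
      funext y
      congr 1
      ext x
      simp only [Set.mem_preimage, Set.mem_setOf_eq, Set.mem_Iic]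
      constructor <;> intro h <;> linarith
    have step2 : ∀ y : ℝ, Measure.map S P (Iic (s - y))
        = ENNReal.ofReal (if 0 ≤ s - y then (1 - exp (-(s-y)))^n else 0) := by
      intro y
      rw [Measure.map_apply hS measurableSet_Iic]
      exact ih (s - y)
    rw [step1]
    simp_rw [step2]
    have hpdfmeas : Measurable (exponentialPDF ((n:ℝ)+1)) :=
      (measurable_exponentialPDFReal _).ennreal_ofReal
    have hfmeas : Measurable (fun y : ℝ =>
        ENNReal.ofReal (if 0 ≤ s - y then (1 - exp (-(s-y)))^n else 0)) := by
      apply Measurable.ennreal_ofReal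
      apply Measurable.ite (measurableSet_le measurable_const (measurable_const.sub measurable_id))
      · fun_prop
      · exact measurable_const
    rw [show expMeasure ((n:ℝ)+1) = volume.withDensity (exponentialPDF ((n:ℝ)+1)) from rfl,
      lintegral_withDensity_eq_lintegral_mul _ hpdfmeas hfmeas]
    have hnn : ∀ y : ℝ, 0 ≤ (if 0 ≤ y then ((n:ℝ)+1) * exp (-(((n:ℝ)+1) * y)) else 0) := by
      intro y; split_ifs with h
      · positivity
      · exact le_refl 0
    simp only [Pi.mul_apply]
    simp_rw [exponentialPDF_eq]
    simp_rw [← ENNReal.ofReal_mul (hnn _)]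
    by_cases hs : 0 ≤ s
    · rw [my_lint n s hs, if_pos hs]
    · rw [if_neg hs]
      have hz : ∀ y : ℝ, ((if 0 ≤ y then ((n:ℝ)+1) * exp (-(((n:ℝ)+1) * y)) else 0) *
          (if 0 ≤ s - y then (1 - exp (-(s - y)))^n else 0)) = 0 := by
        intro y
        by_cases hy : 0 ≤ y
        · rw [if_neg (show ¬ (0 ≤ s - y) by push_neg at hs ⊢; linarith), mul_zero]
        · rw [if_neg hy, zero_mul]
      simp_rw [hz]
      simp

/-- Let `T_1, T_2, ...` be independent with `T_j ~ Exp(j)` (here `T j` has rate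
`j + 1`, representing `T_{j+1}`), and let
`N_t = max {n | T_1 + ... + T_n ≤ t}` (so `N_t = 0` if `T_1 > t`).
Then `P(N_t = k) = e^{-t} (1 - e^{-t})^k` for every `k ≥ 0`, i.e. `N_t` is
geometrically distributed with parameter `e^{-t}`. -/
theorem geometric_number_of_jumps
    {Ω : Type*} [MeasurableSpace Ω] (P : Measure Ω) [IsProbabilityMeasure P]
    (T : ℕ → Ω → ℝ) (hmeas : ∀ j, Measurable (T j))
    (hindep : iIndepFun T P)
    (hlaw : ∀ j : ℕ, Measure.map (T j) P = expMeasure ((j : ℝ) + 1))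
    (t : ℝ) (ht : 0 ≤ t)
    (N : Ω → ℕ)
    (hN : ∀ ω, N ω = sSup {n : ℕ | ∑ j ∈ Finset.range n, T j ω ≤ t})
    (k : ℕ) :
    P {ω | N ω = k} = ENNReal.ofReal (exp (-t) * (1 - exp (-t)) ^ k) := by
  classical
  set c : ℝ := 1 - exp (-t) with hc
  have hexp1 : exp (-t) ≤ 1 := exp_le_one_iff.2 (by linarith)
  have hexp0 : 0 < exp (-t) := exp_pos _
  have hc0 : 0 ≤ c := by rw [hc]; linarith
  have hc1 : c < 1 := by rw [hc]; linarith
  set S : ℕ → Ω → ℝ := fun n ω => ∑ j ∈ Finset.range n, T j ω with hSdef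
  have hSmeas : ∀ n, Measurable (S n) := fun n => Finset.measurable_sum _ fun j _ => hmeas j
  have hA : ∀ n, MeasurableSet {ω | S n ω ≤ t} :=
    fun n => measurableSet_le (hSmeas n) measurable_const
  have hcdf : ∀ n, P {ω | S n ω ≤ t} = ENNReal.ofReal (c ^ n) := by
    intro n
    have h := cdf_sum_exp P T hmeas hindep hlaw n t
    rw [if_pos ht] at h
    exact h
  have hmono : ∀ ω, (∀ j, 0 < T j ω) → Monotone (fun n => S n ω) := by
    intro ω hpos a b hab
    exact Finset.sum_le_sum_of_subset_of_nonneg (Finset.range_subset_range.2 hab)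
      (fun j _ _ => (hpos j).le)
  have hTpos : ∀ᵐ ω ∂P, ∀ j, 0 < T j ω := by
    rw [ae_all_iff]
    intro j
    rw [ae_iff]
    have hsetj : {ω | ¬ 0 < T j ω} = T j ⁻¹' (Iic 0) := by ext ω; simp [not_lt]
    rw [hsetj, ← Measure.map_apply (hmeas j) measurableSet_Iic, hlaw j]
    have h1 : expMeasure ((j:ℝ)+1) (Iic 0) = ∫⁻ y in Iic 0, exponentialPDF ((j:ℝ)+1) y :=
      withDensity_apply _ measurableSet_Iic
    rw [h1, lintegral_exponentialPDF_eq_antiDeriv (by positivity) 0]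
    norm_num
  have hesc : ∀ᵐ ω ∂P, ∃ n, ¬ S n ω ≤ t := by
    rw [ae_iff]
    have hseteq : {ω | ¬ ∃ n, ¬ S n ω ≤ t} = ⋂ n, {ω | S n ω ≤ t} := by
      ext ω; simp
    rw [hseteq]
    have hle : ∀ n, P (⋂ m, {ω | S m ω ≤ t}) ≤ ENNReal.ofReal (c ^ n) := fun n =>
      (hcdf n) ▸ measure_mono (Set.iInter_subset _ n)
    have htend : Filter.Tendsto (fun n => ENNReal.ofReal (c ^ n)) Filter.atTop (nhds 0) := by
      rw [show (0:ENNReal) = ENNReal.ofReal 0 by simp]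
      exact (ENNReal.continuous_ofReal.tendsto 0).comp
        (tendsto_pow_atTop_nhds_zero_of_lt_one hc0 hc1)
    exact le_antisymm (ge_of_tendsto' htend hle) zero_le
  have hptwise : ∀ ω, (∀ j, 0 < T j ω) → (∃ n, ¬ S n ω ≤ t) →
      (N ω = k ↔ (S k ω ≤ t ∧ ¬ S (k+1) ω ≤ t)) := by
    intro ω hpos hex
    have hm := hmono ω hpos
    have h0mem : (0:ℕ) ∈ {n : ℕ | S n ω ≤ t} := by
      simp only [Set.mem_setOf_eq, hSdef, Finset.range_zero, Finset.sum_empty]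
      exact ht
    obtain ⟨n₀, hn₀⟩ := hex
    have hbdd : BddAbove {n : ℕ | S n ω ≤ t} := by
      refine ⟨n₀, fun m hm2 => ?_⟩
      by_contra hcon
      push_neg at hcon
      exact hn₀ (le_trans (hm hcon.le) hm2)
    have hNsup : N ω = sSup {n : ℕ | S n ω ≤ t} := hN ω
    have hmem : sSup {n : ℕ | S n ω ≤ t} ∈ {n : ℕ | S n ω ≤ t} :=
      Nat.sSup_mem ⟨0, h0mem⟩ hbdd
    constructor
    · intro hk
      rw [hNsup] at hk
      constructor
      · rw [← hk]; exact hmem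
      · intro hcon
        have h2 := le_csSup hbdd (show (k+1) ∈ {n : ℕ | S n ω ≤ t} from hcon)
        rw [hk] at h2
        omega
    · rintro ⟨h1, h2⟩
      rw [hNsup]
      have hle1 : k ≤ sSup {n : ℕ | S n ω ≤ t} := le_csSup hbdd h1
      have hle2 : sSup {n : ℕ | S n ω ≤ t} ≤ k := by
        by_contra hcon
        push_neg at hcon
        exact h2 (le_trans (hm hcon) hmem)
      omega
  have haeq : ({ω | N ω = k} : Set Ω) =ᵐ[P] (({ω | S k ω ≤ t} \ {ω | S (k+1) ω ≤ t} : Set Ω)) := by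
    rw [Filter.eventuallyEq_set]
    filter_upwards [hTpos, hesc] with ω hpos hex
    show N ω = k ↔ _ ∈ _ \ _
    rw [Set.mem_diff]
    exact hptwise ω hpos hex
  rw [measure_congr haeq]
  have hdiffeq : {ω | S k ω ≤ t} \ {ω | S (k+1) ω ≤ t}
      = {ω | S k ω ≤ t} \ ({ω | S k ω ≤ t} ∩ {ω | S (k+1) ω ≤ t}) := by
    rw [Set.diff_self_inter]
  rw [hdiffeq, measure_diff Set.inter_subset_left
    ((hA k).inter (hA (k+1))).nullMeasurableSet (measure_ne_top P _)]
  have hinter : P ({ω | S k ω ≤ t} ∩ {ω | S (k+1) ω ≤ t}) = P {ω | S (k+1) ω ≤ t} := by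
    apply measure_congr
    rw [Filter.eventuallyEq_set]
    filter_upwards [hTpos] with ω hpos
    simp only [Set.mem_inter_iff, Set.mem_setOf_eq]
    exact ⟨fun h => h.2, fun h => ⟨le_trans (hmono ω hpos (Nat.le_succ k)) h, h⟩⟩
  rw [hinter, hcdf k, hcdf (k+1)]
  have harith : exp (-t) * c ^ k = c ^ k - c ^ (k+1) := by rw [hc]; ring
  rw [harith, ENNReal.ofReal_sub _ (pow_nonneg hc0 _)]
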